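/- Let c be a natural number, let w be a Gauss word of length 2c, and let j, j' : Fin (2c) be positions such that step_j(x) = −step_{j'}(x) for every assignment x, where step_b(x) = d_{b+1}(x) − d_b(x) (indices mod 2c). Then w j = w j', i.e., j and j' are the two positions of the same letter. Together with the fact that same-letter columns sum to zero, this shows that the partition of the 2c columns of the step matrix into c pairs of columns summing to zero exists and is unique, and it coincides with the pairing of positions given by the letters of w. -/
import Mathlib


namespace Warping

/-- A Gauss word of length `2c`: every letter occurs at exactly two positions. -/
def IsGaussWord (c : ℕ) (w : Fin (2*c) → Fin c) : Prop :=
  ∀ i : Fin c, (Finset.univ.filter (fun j => w j = i)).card = 2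

/-- The cyclic successor of an index. -/
def next {n : ℕ} (b : Fin n) : Fin n :=
  ⟨((b : ℕ) + 1) % n, Nat.mod_lt _ (Nat.lt_of_le_of_lt (Nat.zero_le _) b.isLt)⟩

/-- `j` is the first (smaller) of the two positions of its letter. -/
def isFirst (c : ℕ) (w : Fin (2*c) → Fin c) (j : Fin (2*c)) : Prop :=
  ∀ j' : Fin (2*c), w j' = w j → j ≤ j'

/-- Under the assignment `x`, position `j` is passed under. -/
def passedUnder (c : ℕ) (w : Fin (2*c) → Fin c) (x : Fin c → Bool) (j : Fin (2*c)) : Prop :=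
  (x (w j) = true) ↔ isFirst c w j

/-- Time at which position `j` is met in the cyclic traversal starting at base `b`. -/
def time (c : ℕ) (b j : Fin (2*c)) : ℕ := ((j : ℕ) + 2*c - (b : ℕ)) % (2*c)

/-- The letter `i` is a warping crossing for assignment `x` and base `b`: the position of `i`
met earlier in the cyclic traversal starting at `b` is passed under. -/
def IsWarpingCrossing (c : ℕ) (w : Fin (2*c) → Fin c) (x : Fin c → Bool)
    (b : Fin (2*c)) (i : Fin c) : Prop :=
  ∃ j : Fin (2*c), w j = i ∧ (∀ j' : Fin (2*c), w j' = i → time c b j ≤ time c b j') ∧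
    passedUnder c w x j

open scoped Classical in
/-- The warping degree of the assignment `x` with base point `b`. -/
noncomputable def warpingDegree (c : ℕ) (w : Fin (2*c) → Fin c) (x : Fin c → Bool)
    (b : Fin (2*c)) : ℕ :=
  (Finset.univ.filter (fun i => IsWarpingCrossing c w x b i)).card

/-- The step `d_{b+1}(x) - d_b(x)` of the warping degree sequence. -/
noncomputable def step (c : ℕ) (w : Fin (2*c) → Fin c) (x : Fin c → Bool) (b : Fin (2*c)) : ℤ :=
  (warpingDegree c w x (next b) : ℤ) - (warpingDegree c w x b : ℤ)

/- ### Auxiliary lemmas -/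

open scoped Classical

lemma time_closed (c : ℕ) (b j : Fin (2*c)) :
    time c b j = if (b:ℕ) ≤ (j:ℕ) then (j:ℕ) - b else (j:ℕ) + 2*c - b := by
  have hb := b.isLt
  have hj := j.isLt
  unfold time
  rcases le_or_gt (b:ℕ) (j:ℕ) with hle | hlt
  · rw [if_pos hle]
    have h1 : (j:ℕ) + 2*c - b = ((j:ℕ) - b) + 2*c := by omega
    rw [h1, Nat.add_mod_right, Nat.mod_eq_of_lt (by omega)]
  · rw [if_neg (by omega)]
    exact Nat.mod_eq_of_lt (by omega)

lemma next_closed (c : ℕ) (b : Fin (2*c)) :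
    ((next b : Fin (2*c)) : ℕ) = if (b:ℕ) + 1 = 2*c then 0 else (b:ℕ) + 1 := by
  have hb := b.isLt
  show ((b:ℕ) + 1) % (2*c) = _
  rcases eq_or_lt_of_le (Nat.succ_le_of_lt hb) with he | hl
  · have he' : (b:ℕ) + 1 = 2*c := he
    rw [if_pos he', he', Nat.mod_self]
  · rw [if_neg (by omega), Nat.mod_eq_of_lt hl]

lemma time_inj (c : ℕ) (b : Fin (2*c)) {j j' : Fin (2*c)}
    (h : time c b j = time c b j') : j = j' := by
  have hb := b.isLt
  have hj := j.isLt
  have hj' := j'.isLt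
  rw [time_closed, time_closed] at h
  apply Fin.ext
  split_ifs at h <;> omega

lemma time_self (c : ℕ) (b : Fin (2*c)) : time c b b = 0 := by
  rw [time_closed]; simp

lemma time_lt (c : ℕ) (b j : Fin (2*c)) : time c b j < 2*c := by
  have hb := b.isLt
  have hj := j.isLt
  rw [time_closed]; split_ifs <;> omega

lemma time_next_self (c : ℕ) (b : Fin (2*c)) : time c (next b) b = 2*c - 1 := by
  have hb := b.isLt
  rw [time_closed, next_closed]
  split_ifs <;> omega

lemma time_next_of_ne (c : ℕ) (b : Fin (2*c)) {j : Fin (2*c)} (hne : j ≠ b) :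
    time c (next b) j + 1 = time c b j := by
  have hb := b.isLt
  have hj := j.isLt
  have hne' : (j:ℕ) ≠ (b:ℕ) := fun h => hne (Fin.ext h)
  rw [time_closed, time_closed, next_closed]
  split_ifs <;> omega

/-- From the Gauss word condition: each position has a unique partner. -/
lemma exists_partner (c : ℕ) (w : Fin (2*c) → Fin c) (hw : IsGaussWord c w) (j : Fin (2*c)) :
    ∃ j₂ : Fin (2*c), j₂ ≠ j ∧ w j₂ = w j ∧ ∀ k : Fin (2*c), w k = w j → k = j ∨ k = j₂ := by
  have h2 := hw (w j)
  rw [Finset.card_eq_two] at h2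
  obtain ⟨a, b, hab, hset⟩ := h2
  have hj : j ∈ Finset.univ.filter (fun k => w k = w j) := by simp
  rw [hset] at hj
  simp only [Finset.mem_insert, Finset.mem_singleton] at hj
  have hmem : ∀ k : Fin (2*c), w k = w j → k = a ∨ k = b := by
    intro k hk
    have : k ∈ Finset.univ.filter (fun k => w k = w j) := by simp [hk]
    rw [hset] at this
    simpa using this
  have ha : w a = w j := by
    have : a ∈ Finset.univ.filter (fun k => w k = w j) := by rw [hset]; simp
    simpa using this
  have hb : w b = w j := by
    have : b ∈ Finset.univ.filter (fun k => w k = w j) := by rw [hset]; simp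
    simpa using this
  rcases hj with rfl | rfl
  · exact ⟨b, fun h => hab h.symm |>.elim, hb, fun k hk => (hmem k hk)⟩
  · exact ⟨a, hab, ha, fun k hk => (hmem k hk).symm⟩

/-- Crossing characterization when we know the two positions and which is met first. -/
lemma crossing_iff (c : ℕ) (w : Fin (2*c) → Fin c) (x : Fin c → Bool) (b : Fin (2*c))
    (i : Fin c) (j₁ j₂ : Fin (2*c)) (h1 : w j₁ = i) (h2 : w j₂ = i)
    (hall : ∀ k : Fin (2*c), w k = i → k = j₁ ∨ k = j₂)
    (hlt : time c b j₁ < time c b j₂) :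
    IsWarpingCrossing c w x b i ↔ passedUnder c w x j₁ := by
  constructor
  · rintro ⟨j, hj, hmin, hu⟩
    rcases hall j hj with rfl | rfl
    · exact hu
    · exact absurd (hmin j₁ h1) (by omega)
  · intro hu
    refine ⟨j₁, h1, ?_, hu⟩
    intro k hk
    rcases hall k hk with rfl | rfl <;> omega

lemma passedUnder_partner (c : ℕ) (w : Fin (2*c) → Fin c) (x : Fin c → Bool)
    (j j₂ : Fin (2*c)) (hne : j₂ ≠ j) (heq : w j₂ = w j)
    (hall : ∀ k : Fin (2*c), w k = w j → k = j ∨ k = j₂) :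
    (passedUnder c w x j₂ ↔ ¬ passedUnder c w x j) := by
  have hfirst : isFirst c w j ↔ ¬ isFirst c w j₂ := by
    constructor
    · intro hf hf2
      have h1 := hf j₂ heq
      have h2 := hf2 j (by rw [heq])
      exact hne (le_antisymm (by exact_mod_cast h2) (by exact_mod_cast h1))
    · intro hnf
      intro k hk
      rcases hall k hk with rfl | rfl
      · exact le_refl _
      · by_contra hle
        apply hnf
        intro k' hk'
        have hk'' : w k' = w j := by rw [hk', heq]
        rcases hall k' hk'' with rfl | rfl
        · exact le_of_not_ge hle
        · exact le_refl _
  unfold passedUnder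
  rw [heq]
  tauto

/-- Key step formula: the step is `-1` if the base position is passed under, `+1` otherwise. -/
lemma step_eq (c : ℕ) (w : Fin (2*c) → Fin c) (hw : IsGaussWord c w)
    (x : Fin c → Bool) (b : Fin (2*c)) :
    step c w x b = if passedUnder c w x b then -1 else 1 := by
  have hc : 0 < c := by
    by_contra hc
    have := b.isLt; omega
  obtain ⟨b₂, hne, heq, hall⟩ := exists_partner c w hw b
  -- crossing at base b for letter w b ↔ passedUnder b
  have htb2 : 0 < time c b b₂ := by
    rcases Nat.eq_zero_or_pos (time c b b₂) with h0 | h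
    · exact absurd (time_inj c b (h0.trans (time_self c b).symm)) hne
    · exact h
  have hcb : IsWarpingCrossing c w x b (w b) ↔ passedUnder c w x b := by
    apply crossing_iff c w x b (w b) b b₂ rfl heq (fun k hk => hall k hk)
    rw [time_self]; exact htb2
  -- crossing at base (next b) for letter w b ↔ passedUnder b₂
  have hcnb : IsWarpingCrossing c w x (next b) (w b) ↔ passedUnder c w x b₂ := by
    apply crossing_iff c w x (next b) (w b) b₂ b heq rfl
      (fun k hk => (hall k hk).symm)
    rw [time_next_self]
    have h1 := time_next_of_ne c b hne
    have h2 := time_lt c b b₂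
    omega
  have hpartner := passedUnder_partner c w x b b₂ hne heq hall
  -- for letters other than w b, crossing status unchanged
  have hother : ∀ i : Fin c, i ≠ w b →
      (IsWarpingCrossing c w x (next b) i ↔ IsWarpingCrossing c w x b i) := by
    intro i hi
    obtain ⟨j₂, hne', heq', hall'⟩ := exists_partner c w hw (Classical.choose
      (Finset.card_pos.mp (by rw [hw i]; omega) : ∃ a, a ∈ Finset.univ.filter (fun j => w j = i)))
    -- instead, extract positions of i directly
    clear hne' heq' hall' j₂
    have h2 := hw i
    rw [Finset.card_eq_two] at h2
    obtain ⟨a, a', haa, hset⟩ := h2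
    have hwa : w a = i := by
      have : a ∈ Finset.univ.filter (fun k => w k = i) := by rw [hset]; simp
      simpa using this
    have hwa' : w a' = i := by
      have : a' ∈ Finset.univ.filter (fun k => w k = i) := by rw [hset]; simp
      simpa using this
    have hmem : ∀ k : Fin (2*c), w k = i → k = a ∨ k = a' := by
      intro k hk
      have : k ∈ Finset.univ.filter (fun k => w k = i) := by simp [hk]
      rw [hset] at this
      simpa using this
    have hab : a ≠ b := fun h => hi (by rw [← hwa, h])
    have ha'b : a' ≠ b := fun h => hi (by rw [← hwa', h])
    have hta := time_next_of_ne c b hab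
    have hta' := time_next_of_ne c b ha'b
    have htne : time c b a ≠ time c b a' := fun h => haa (time_inj c b h)
    rcases lt_or_gt_of_ne htne with hlt | hgt
    · rw [crossing_iff c w x b i a a' hwa hwa' hmem hlt,
        crossing_iff c w x (next b) i a a' hwa hwa' hmem (by omega)]
    · rw [crossing_iff c w x b i a' a hwa' hwa (fun k hk => (hmem k hk).symm) hgt,
        crossing_iff c w x (next b) i a' a hwa' hwa (fun k hk => (hmem k hk).symm) (by omega)]
  -- now compute the cardinality difference via sums
  unfold step warpingDegree
  rw [Finset.card_filter, Finset.card_filter]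
  push_cast
  rw [← Finset.sum_sub_distrib]
  rw [Finset.sum_eq_single (w b)]
  · by_cases hu : passedUnder c w x b
    · rw [if_pos hu]
      rw [if_pos (hcb.mpr hu), if_neg (fun hcr => (hpartner.mp (hcnb.mp hcr)) hu)]
      ring
    · rw [if_neg hu]
      rw [if_neg (fun hcr => hu (hcb.mp hcr)), if_pos (hcnb.mpr (hpartner.mpr hu))]
      ring
  · intro i _ hi
    rcases Classical.em (IsWarpingCrossing c w x b i) with hcr | hcr
    · rw [if_pos hcr, if_pos ((hother i hi).mpr hcr)]; ring
    · rw [if_neg hcr, if_neg (fun h => hcr ((hother i hi).mp h))]; ring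
  · intro habs
    exact absurd (Finset.mem_univ (w b)) habs

/-- If two columns of the ±1 step matrix sum to the zero column, then the two positions
carry the same letter; hence the pairing of columns of the step matrix into pairs summing
to zero coincides with the pairing of positions given by the letters of the Gauss word. -/
theorem eq_letter_of_step_eq_neg (c : ℕ) (w : Fin (2*c) → Fin c) (hw : IsGaussWord c w)
    (j j' : Fin (2*c)) (h : ∀ x : Fin c → Bool, step c w x j = - step c w x j') :
    w j = w j' := by
  by_contra hne
  -- choose an assignment making both positions passed under
  set x : Fin c → Bool := fun i =>
    if i = w j then (if isFirst c w j then true else false)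
    else (if isFirst c w j' then true else false) with hx
  have huj : passedUnder c w x j := by
    unfold passedUnder
    rw [hx]
    simp only [if_pos rfl]
    by_cases hf : isFirst c w j <;> simp [hf]
  have huj' : passedUnder c w x j' := by
    unfold passedUnder
    rw [hx]
    simp only
    rw [if_neg (fun hh => hne hh.symm)]
    by_cases hf : isFirst c w j' <;> simp [hf]
  have h1 := step_eq c w hw x j
  have h2 := step_eq c w hw x j'
  rw [if_pos huj] at h1
  rw [if_pos huj'] at h2
  have := h x
  rw [h1, h2] at this
  norm_num at this

end Warping
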